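/- If M is a point in the plane of a square ABCD with integer side length such that the distances from M to all four vertices are positive integers, then none of the angles ∠AMB, ∠BMC, ∠CMD, ∠DMA equals 2π/3. -/

import Mathlib

open EuclideanGeometry

private lemma dist_sq_fin2 (M P : EuclideanSpace ℝ (Fin 2)) :
    dist M P ^ 2 = (M 0 - P 0) ^ 2 + (M 1 - P 1) ^ 2 := by
  rw [EuclideanSpace.dist_eq, Real.sq_sqrt (by positivity)]
  simp [Fin.sum_univ_two, Real.dist_eq, sq_abs]

private lemma key_lemma (a p q s : ℕ) (ha : 0 < a) (hp : 0 < p) (hq : 0 < q)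
    (u v : ℝ)
    (h1 : u ^ 2 + v ^ 2 = (p : ℝ) ^ 2)
    (h2 : u ^ 2 + (v - a) ^ 2 = (q : ℝ) ^ 2)
    (h3 : (u - a) ^ 2 + v ^ 2 = (s : ℝ) ^ 2)
    (hang : (p : ℝ) ^ 2 + (q : ℝ) ^ 2 + (p : ℝ) * q = (a : ℝ) ^ 2) : False := by
  -- 2av = p(2p+q)
  have hv : 2 * (a : ℝ) * v = (p : ℝ) * (2 * p + q) := by nlinarith
  -- (2au)^2 = 3 (pq)^2
  have hu : (2 * (a : ℝ) * u) ^ 2 = 3 * ((p : ℝ) * q) ^ 2 := by nlinarith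
  -- 2au = a^2 + p^2 - s^2 is an integer
  have hU : 2 * (a : ℝ) * u = ((a : ℤ) ^ 2 + (p : ℤ) ^ 2 - (s : ℤ) ^ 2 : ℤ) := by
    push_cast
    nlinarith
  set U : ℤ := (a : ℤ) ^ 2 + (p : ℤ) ^ 2 - (s : ℤ) ^ 2 with hUdef
  rw [hU] at hu
  have hZ : U ^ 2 = 3 * ((p : ℤ) * q) ^ 2 := by exact_mod_cast hu
  have hk : (0 : ℝ) < (p : ℝ) * q := by positivity
  have irr : Irrational (Real.sqrt 3) := by
    have := (Nat.prime_three).irrational_sqrt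
    simpa using this
  apply irr
  refine ⟨|(U : ℚ) / ((p : ℚ) * q)|, ?_⟩
  have h3eq : ((U : ℝ) / ((p : ℝ) * q)) ^ 2 = 3 := by
    rw [div_pow]
    rw [eq_comm, eq_div_iff (by positivity)]
    exact_mod_cast hZ.symm
  have : Real.sqrt 3 = |(U : ℝ) / ((p : ℝ) * q)| := by
    rw [← h3eq, Real.sqrt_sq_eq_abs]
  rw [this]
  push_cast
  rw [abs_div]

private lemma lawcos_two_pi_div_three (P Q M' : EuclideanSpace ℝ (Fin 2))
    (h : ∠ P M' Q = 2 * Real.pi / 3) :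
    dist P Q ^ 2 = dist P M' ^ 2 + dist Q M' ^ 2 + dist P M' * dist Q M' := by
  have hlc := EuclideanGeometry.law_cos P M' Q
  rw [h] at hlc
  have hc : Real.cos (2 * Real.pi / 3) = -(1 / 2) := by
    have h23 : 2 * Real.pi / 3 = Real.pi - Real.pi / 3 := by ring
    rw [h23, Real.cos_pi_sub, Real.cos_pi_div_three]
  rw [hc] at hlc
  linarith

set_option maxHeartbeats 1000000 in
theorem steinhaus_square_no_two_pi_div_three
    (a : ℕ) (ha : 0 < a) (M : EuclideanSpace ℝ (Fin 2))
    (A B C D : EuclideanSpace ℝ (Fin 2))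
    (hA : A = !₂[0, 0]) (hB : B = !₂[0, (a : ℝ)])
    (hC : C = !₂[(a : ℝ), (a : ℝ)]) (hD : D = !₂[(a : ℝ), 0])
    (hMA : ∃ n : ℕ, 0 < n ∧ dist M A = n)
    (hMB : ∃ n : ℕ, 0 < n ∧ dist M B = n)
    (hMC : ∃ n : ℕ, 0 < n ∧ dist M C = n)
    (hMD : ∃ n : ℕ, 0 < n ∧ dist M D = n) :
    ∠ A M B ≠ 2 * Real.pi / 3 ∧ ∠ B M C ≠ 2 * Real.pi / 3 ∧
    ∠ C M D ≠ 2 * Real.pi / 3 ∧ ∠ D M A ≠ 2 * Real.pi / 3 := by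
  obtain ⟨p, hp, hdp⟩ := hMA
  obtain ⟨q, hq, hdq⟩ := hMB
  obtain ⟨r, hr, hdr⟩ := hMC
  obtain ⟨s, hs, hds⟩ := hMD
  set x : ℝ := M 0 with hx
  set y : ℝ := M 1 with hy
  -- squared distance equations
  have eA : x ^ 2 + y ^ 2 = (p : ℝ) ^ 2 := by
    have := dist_sq_fin2 M A
    rw [hdp, hA] at this
    simpa using this.symm
  have eB : x ^ 2 + (y - a) ^ 2 = (q : ℝ) ^ 2 := by
    have := dist_sq_fin2 M B
    rw [hdq, hB] at this
    simpa using this.symm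
  have eC : (x - a) ^ 2 + (y - a) ^ 2 = (r : ℝ) ^ 2 := by
    have := dist_sq_fin2 M C
    rw [hdr, hC] at this
    simpa using this.symm
  have eD : (x - a) ^ 2 + y ^ 2 = (s : ℝ) ^ 2 := by
    have := dist_sq_fin2 M D
    rw [hds, hD] at this
    simpa using this.symm
  have sideAB : dist A B ^ 2 = (a : ℝ) ^ 2 := by
    rw [dist_sq_fin2, hA, hB]; simp
  have sideBC : dist B C ^ 2 = (a : ℝ) ^ 2 := by
    rw [dist_sq_fin2, hB, hC]; simp
  have sideCD : dist C D ^ 2 = (a : ℝ) ^ 2 := by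
    rw [dist_sq_fin2, hC, hD]; simp
  have sideDA : dist D A ^ 2 = (a : ℝ) ^ 2 := by
    rw [dist_sq_fin2, hD, hA]; simp
  have dsymm : ∀ P : EuclideanSpace ℝ (Fin 2), dist P M = dist M P := fun P => dist_comm P M
  refine ⟨?_, ?_, ?_, ?_⟩
  · intro hang
    have h := lawcos_two_pi_div_three A B M hang
    rw [sideAB, dsymm A, dsymm B, hdp, hdq] at h
    -- u = x, v = y, p = MA, q = MB, s = MD
    exact key_lemma a p q s ha hp hq x y eA eB eD h.symm
  · intro hang
    have h := lawcos_two_pi_div_three B C M hang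
    rw [sideBC, dsymm B, dsymm C, hdq, hdr] at h
    -- u = a - y, v = x, p = MB, q = MC, s = MA
    refine key_lemma a q r p ha hq hr ((a : ℝ) - y) x ?_ ?_ ?_ h.symm
    · linear_combination eB
    · linear_combination eC
    · linear_combination eA
  · intro hang
    have h := lawcos_two_pi_div_three C D M hang
    rw [sideCD, dsymm C, dsymm D, hdr, hds] at h
    -- u = a - x, v = a - y, p = MC, q = MD, s = MB
    refine key_lemma a r s q ha hr hs ((a : ℝ) - x) ((a : ℝ) - y) ?_ ?_ ?_ h.symm
    · linear_combination eC
    · linear_combination eD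
    · linear_combination eB
  · intro hang
    have h := lawcos_two_pi_div_three D A M hang
    rw [sideDA, dsymm D, dsymm A, hds, hdp] at h
    -- u = y, v = a - x, p = MD, q = MA, s = MC
    refine key_lemma a s p r ha hs hp y ((a : ℝ) - x) ?_ ?_ ?_ h.symm
    · linear_combination eD
    · linear_combination eA
    · linear_combination eC
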